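/- Let M be a finite set of nonzero vectors in ℚ^r, pairwise non-parallel, such that the matroid they represent is a spike of rank r with tip t: the simplification of the contraction by t is a circuit of size r and each parallel class after contracting t has size two. If the vectors are the columns of a Δ-modular integer matrix, then r ≤ 2Δ. -/

import Mathlib

open Submodule

private lemma sumOneSubInv {r : ℕ} (Δ : ℚ) (w : Fin r → ℚ) (hw : ∀ k, 1 ≤ w k)
    (hprod : ∀ S : Finset (Fin r), S ≠ Finset.univ → ∏ k ∈ S, w k ≤ Δ) :
    ∀ S : Finset (Fin r), ∑ k ∈ S, (1 - (w k)⁻¹) ≤ Δ * (1 - (∏ k ∈ S, w k)⁻¹) := by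
  intro S
  classical
  induction S using Finset.induction_on with
  | empty => simp
  | insert _ _ hm =>
    rename_i m S ih
    have hwpos : ∀ k, 0 < w k := fun k => lt_of_lt_of_le one_pos (hw k)
    have hppos : 0 < ∏ k ∈ S, w k := Finset.prod_pos (fun k _ => hwpos k)
    have hpone : 1 ≤ ∏ k ∈ S, w k := by
      calc (1:ℚ) = ∏ _k ∈ S, 1 := by simp
        _ ≤ ∏ k ∈ S, w k := Finset.prod_le_prod (by simp) (fun k _ => hw k)
    have hSne : S ≠ Finset.univ := by
      intro h
      exact hm (h ▸ Finset.mem_univ m)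
    have hpΔ : ∏ k ∈ S, w k ≤ Δ := hprod S hSne
    rw [Finset.sum_insert hm, Finset.prod_insert hm]
    have key : (1 - (w m)⁻¹) + Δ * (1 - (∏ k ∈ S, w k)⁻¹) ≤ Δ * (1 - (w m * ∏ k ∈ S, w k)⁻¹) := by
      set p := ∏ k ∈ S, w k with hp
      have h1 : (w m)⁻¹ ≤ 1 := by
        rw [inv_le_one_iff₀]; right; exact hw m
      have h2 : 1 ≤ p⁻¹ * Δ := by
        rw [← inv_mul_cancel₀ (ne_of_gt hppos)]
        exact mul_le_mul_of_nonneg_left hpΔ (inv_nonneg.2 hppos.le)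
      have hinv : (w m * p)⁻¹ = (w m)⁻¹ * p⁻¹ := by rw [mul_inv]
      rw [hinv]
      have hnn : 0 ≤ (1 - (w m)⁻¹) * (p⁻¹ * Δ - 1) := mul_nonneg (by linarith) (by linarith)
      nlinarith [hnn]
    calc (1 - (w m)⁻¹) + ∑ k ∈ S, (1 - (w k)⁻¹)
        ≤ (1 - (w m)⁻¹) + Δ * (1 - (∏ k ∈ S, w k)⁻¹) := by linarith [ih]
      _ ≤ _ := key

private lemma coeff_of_pair {V : Type*} [AddCommGroup V] [Module ℚ V] [FiniteDimensional ℚ V]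
    (t x y : V) (h2 : Module.finrank ℚ (span ℚ ({t, x, y} : Set V)) = 2)
    (htx : LinearIndependent ℚ ![t, x]) (hty : LinearIndependent ℚ ![t, y])
    (hxy : LinearIndependent ℚ ![x, y]) :
    ∃ α β : ℚ, α ≠ 0 ∧ β ≠ 0 ∧ y = α • x + β • t := by
  have hle : span ℚ ({t, x} : Set V) ≤ span ℚ ({t, x, y} : Set V) := by
    apply span_mono; intro v hv
    simp only [Set.mem_insert_iff, Set.mem_singleton_iff] at hv ⊢
    tauto
  have hrange : ({t, x} : Set V) = Set.range ![t, x] := by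
    simp only [Matrix.range_cons, Matrix.range_empty, Set.union_empty, Set.union_singleton]
    exact (Set.pair_comm x t).symm
  have hr2 : Module.finrank ℚ (span ℚ ({t, x} : Set V)) = 2 := by
    rw [hrange, finrank_span_eq_card htx]
    simp
  have heq : span ℚ ({t, x} : Set V) = span ℚ ({t, x, y} : Set V) :=
    eq_of_le_of_finrank_eq hle (by rw [hr2, h2])
  have hy : y ∈ span ℚ ({t, x} : Set V) := by
    rw [heq]
    exact subset_span (by simp)
  obtain ⟨β, α, hba⟩ := mem_span_pair.1 hy
  have hyne : y ≠ 0 := by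
    have := linearIndependent_fin2.1 hty
    exact this.1
  have hα : α ≠ 0 := by
    intro h0
    rw [h0, zero_smul, add_zero] at hba
    rcases eq_or_ne β 0 with hβ | hβ
    · rw [hβ, zero_smul] at hba; exact hyne hba.symm
    · have := (linearIndependent_fin2.1 hty).2 β⁻¹
      apply this
      show β⁻¹ • y = t
      rw [← hba, smul_smul, inv_mul_cancel₀ hβ, one_smul]
  have hβ : β ≠ 0 := by
    intro h0
    rw [h0, zero_smul, zero_add] at hba
    have := (linearIndependent_fin2.1 hxy).2 α⁻¹
    apply this
    show α⁻¹ • y = x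
    rw [← hba, smul_smul, inv_mul_cancel₀ hα, one_smul]
  exact ⟨α, β, hα, hβ, by rw [← hba]; abel⟩

private lemma coeff_swap {V : Type*} [AddCommGroup V] [Module ℚ V]
    (t x y : V) (α β : ℚ) (hα : α ≠ 0) (h : y = α • x + β • t) :
    x = α⁻¹ • y + (-(β / α)) • t := by
  rw [h]
  match_scalars
  · field_simp
  · field_simp; ring

theorem spike_rank_le_two_delta (Δ : ℤ) (hΔ : 1 ≤ Δ) (r : ℕ)
    (A : Matrix (Fin r) (Unit ⊕ Fin r × Fin 2) ℤ)
    (col : (Unit ⊕ Fin r × Fin 2) → (Fin r → ℚ))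
    (hcol : ∀ j i, col j i = (A i j : ℚ))
    -- `A` is `Δ`-modular of rank `r`
    (hrank : A.rank = r)
    (hmod : ∀ (f : Fin r → Fin r) (g : Fin r → (Unit ⊕ Fin r × Fin 2)),
      |(A.submatrix f g).det| ≤ Δ)
    -- the matroid is simple: columns are nonzero and pairwise non-parallel
    (hsimple : ∀ j k, j ≠ k → LinearIndependent ℚ ![col j, col k])
    -- each pair is parallel after contracting the tip
    (hpairs : ∀ i : Fin r,
      Module.finrank ℚ (span ℚ
        ({col (Sum.inl ()), col (Sum.inr (i, 0)), col (Sum.inr (i, 1))} : Set (Fin r → ℚ))) = 2)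
    -- distinct pairs give distinct parallel classes of the contraction
    (hdistinct : ∀ i i' : Fin r, i ≠ i' →
      Module.finrank ℚ (span ℚ
        ({col (Sum.inl ()), col (Sum.inr (i, 0)), col (Sum.inr (i', 0))} : Set (Fin r → ℚ))) = 3)
    -- the representatives form a circuit after contracting the tip
    (hcircuit : ∀ i : Fin r,
      Module.finrank ℚ (span ℚ
        ({col (Sum.inl ())} ∪ (fun k : Fin r => col (Sum.inr (k, 0))) '' {k | k ≠ i}
          : Set (Fin r → ℚ))) = r) :
    (r : ℤ) ≤ 2 * Δ := by
  classical
  rcases Nat.eq_zero_or_pos r with hr0 | hrpos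
  · subst hr0; simpa using by linarith
  -- pairwise independences
  have hind01 : ∀ i : Fin r, LinearIndependent ℚ ![col (Sum.inr (i,0)), col (Sum.inr (i,1))] :=
    fun i => hsimple _ _ (by simp)
  have hindt : ∀ (i : Fin r) (s : Fin 2),
      LinearIndependent ℚ ![col (Sum.inl ()), col (Sum.inr (i,s))] :=
    fun i s => hsimple _ _ (by simp)
  -- coefficients in the given orientation
  have hpair : ∀ i : Fin r, ∃ αi βi : ℚ, αi ≠ 0 ∧ βi ≠ 0 ∧
      col (Sum.inr (i,1)) = αi • col (Sum.inr (i,0)) + βi • col (Sum.inl ()) := by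
    intro i
    exact coeff_of_pair _ _ _ (hpairs i) (hindt i 0) (hindt i 1) (hind01 i)
  choose α β hα hβ hrel using hpair
  -- orientation choice: ensure |a i| ≥ 1
  let sw : Fin r → Bool := fun i => decide (|α i| < 1)
  let XI : Fin r → (Unit ⊕ Fin r × Fin 2) := fun i => Sum.inr (i, if sw i then 1 else 0)
  let YI : Fin r → (Unit ⊕ Fin r × Fin 2) := fun i => Sum.inr (i, if sw i then 0 else 1)
  let a : Fin r → ℚ := fun i => if sw i then (α i)⁻¹ else α i
  let b : Fin r → ℚ := fun i => if sw i then -(β i / α i) else β i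
  have ha : ∀ i, a i ≠ 0 := by
    intro i; by_cases h : sw i <;> simp [a, h, hα i, inv_ne_zero]
  have hb : ∀ i, b i ≠ 0 := by
    intro i; by_cases h : sw i <;>
      simp [b, h, hβ i, hα i, div_ne_zero, neg_ne_zero, div_eq_zero_iff]
  have ha1 : ∀ i, 1 ≤ |a i| := by
    intro i
    by_cases h : sw i
    · have hlt : |α i| < 1 := by simpa [sw] using h
      have hpos : 0 < |α i| := abs_pos.2 (hα i)
      simp only [a, h, if_true, abs_inv]
      rw [le_inv_comm₀ one_pos hpos]
      · simpa using hlt.le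
    · have : ¬ (|α i| < 1) := by simpa [sw] using h
      simpa [a, h] using not_lt.1 this
  have hXY : ∀ i, col (YI i) = a i • col (XI i) + b i • col (Sum.inl ()) := by
    intro i
    by_cases h : sw i
    · simp only [XI, YI, a, b, h, if_true]
      exact coeff_swap _ _ _ (α i) (β i) (hα i) (hrel i)
    · simp only [XI, YI, a, b, h, if_false]
      exact hrel i
  -- membership lemmas for re-orientation
  have hX0 : ∀ k, col (Sum.inr (k,0)) ∈ span ℚ ({col (Sum.inl ()), col (XI k)} : Set (Fin r → ℚ)) := by
    intro k
    by_cases h : sw k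
    · have := coeff_swap (col (Sum.inl ())) (col (Sum.inr (k,0))) (col (Sum.inr (k,1)))
        (α k) (β k) (hα k) (hrel k)
      refine mem_span_pair.2 ⟨-(β k / α k), (α k)⁻¹, ?_⟩
      simp only [XI, h, if_true]
      rw [this]
      abel
    · refine subset_span ?_
      simp [XI, h]
  have hXmem : ∀ k, col (XI k) ∈ span ℚ
      ({col (Sum.inl ()), col (Sum.inr (k,0))} : Set (Fin r → ℚ)) := by
    intro k
    by_cases h : sw k
    · refine mem_span_pair.2 ⟨β k, α k, ?_⟩
      simp only [XI, h, if_true]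
      rw [add_comm]
      exact (hrel k).symm
    · refine subset_span ?_
      simp [XI, h]
  -- the tip together with any r-1 of the X's is linearly independent
  have hTind : ∀ i : Fin r,
      LinearIndependent ℚ (fun k => col (Function.update XI i (Sum.inl ()) k)) := by
    intro i
    rw [linearIndependent_iff_card_eq_finrank_span]
    have hspan : span ℚ (Set.range fun k => col (Function.update XI i (Sum.inl ()) k))
        = span ℚ ({col (Sum.inl ())} ∪ (fun k : Fin r => col (Sum.inr (k, 0))) '' {k | k ≠ i}) := by
      apply le_antisymm
      · rw [span_le]
        rintro v ⟨k, rfl⟩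
        by_cases hk : k = i
        · subst hk
          simp only [Function.update_self]
          exact subset_span (Or.inl rfl)
        · simp only [Function.update_of_ne hk]
          refine span_le.2 ?_ (hXmem k)
          intro w hw
          rcases hw with rfl | hw
          · exact subset_span (Or.inl rfl)
          · rw [Set.mem_singleton_iff] at hw
            subst hw
            exact subset_span (Or.inr ⟨k, hk, rfl⟩)
      · rw [span_le]
        rintro v hv
        rcases hv with rfl | ⟨k, hk, rfl⟩
        · apply subset_span
          exact ⟨i, by simp only [Function.update_self]⟩
        · refine span_le.2 ?_ (hX0 k)
          intro w hw
          rcases hw with rfl | hw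
          · exact subset_span ⟨i, by simp only [Function.update_self]⟩
          · rw [Set.mem_singleton_iff] at hw
            subst hw
            exact subset_span ⟨k, by simp only [Function.update_of_ne hk]⟩
    rw [Set.finrank, hspan, hcircuit i, Fintype.card_fin]
  -- the rational matrix attached to a selection of columns
  let MQ : (Fin r → (Unit ⊕ Fin r × Fin 2)) → Matrix (Fin r) (Fin r) ℚ :=
    fun g => Matrix.of fun p q => col (g q) p
  -- integrality and boundedness of determinants
  have hdetZ : ∀ g : Fin r → (Unit ⊕ Fin r × Fin 2), ∃ n : ℤ, (MQ g).det = (n:ℚ) ∧ |n| ≤ Δ := by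
    intro g
    refine ⟨(A.submatrix id g).det, ?_, hmod id g⟩
    have h2 : ((A.submatrix id g).map (Int.castRingHom ℚ : ℤ →+* ℚ)) = MQ g := by
      ext p q
      simp [MQ, hcol, Matrix.submatrix]
    rw [← h2, ← RingHom.mapMatrix_apply, ← RingHom.map_det]
    rfl
  have habs : ∀ g, |(MQ g).det| ≤ (Δ:ℚ) := by
    intro g
    obtain ⟨n, hn, hbd⟩ := hdetZ g
    rw [hn, ← Int.cast_abs]
    exact_mod_cast hbd
  have hone : ∀ g, (MQ g).det ≠ 0 → 1 ≤ |(MQ g).det| := by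
    intro g hg
    obtain ⟨n, hn, -⟩ := hdetZ g
    rw [hn] at hg ⊢
    rw [← Int.cast_abs]
    have hn0 : n ≠ 0 := by exact_mod_cast hg
    exact_mod_cast Int.one_le_abs hn0
  -- linear independence of columns gives a nonzero determinant
  have hdet_ne : ∀ (g : Fin r → (Unit ⊕ Fin r × Fin 2)),
      LinearIndependent ℚ (fun k => col (g k)) → (MQ g).det ≠ 0 := by
    intro g hg hdet0
    obtain ⟨v, hv0, hv⟩ := Matrix.exists_mulVec_eq_zero_iff.2 hdet0
    apply hv0
    have hz : ∑ k, v k • col (g k) = 0 := by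
      funext p
      have := congrFun hv p
      simp only [Matrix.mulVec, dotProduct, MQ, Matrix.of_apply, Pi.zero_apply] at this
      simpa [Finset.sum_apply, mul_comm] using this
    have := Fintype.linearIndependent_iff.1 hg v hz
    funext k
    exact this k
  -- basic determinants
  let tI : (Unit ⊕ Fin r × Fin 2) := Sum.inl ()
  let T : Fin r → ℚ := fun i => (MQ (Function.update XI i tI)).det
  have hT_ne : ∀ i, T i ≠ 0 := fun i => hdet_ne _ (hTind i)
  have hT1 : ∀ i, 1 ≤ |T i| := fun i => hone _ (hT_ne i)
  -- update / updateCol compatibility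
  have hupd : ∀ (g : Fin r → (Unit ⊕ Fin r × Fin 2)) (j : Fin r) (w : Unit ⊕ Fin r × Fin 2),
      MQ (Function.update g j w) = (MQ g).updateCol j (col w) := by
    intro g j w
    ext p q
    rw [Matrix.updateCol_apply]
    simp only [MQ, Matrix.of_apply, Function.update_apply]
    split <;> rfl
  have hdup : ∀ (g : Fin r → (Unit ⊕ Fin r × Fin 2)) (j j' : Fin r), j ≠ j' → g j = g j' →
      (MQ g).det = 0 := by
    intro g j j' hne he
    apply Matrix.det_zero_of_column_eq hne
    intro p
    simp only [MQ, Matrix.of_apply, he]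
  -- column expansion
  have hexp : ∀ (g : Fin r → (Unit ⊕ Fin r × Fin 2)) (j k : Fin r),
      (MQ (Function.update g j (YI k))).det
        = a k * (MQ (Function.update g j (XI k))).det
          + b k * (MQ (Function.update g j tI)).det := by
    intro g j k
    rw [hupd, hupd, hupd, hXY k, Matrix.det_updateCol_add,
      Matrix.det_updateCol_smul, Matrix.det_updateCol_smul]
  -- selections by subsets
  let gS : Finset (Fin r) → (Fin r → (Unit ⊕ Fin r × Fin 2)) :=
    fun S k => if k ∈ S then YI k else XI k
  have hgS0 : gS ∅ = XI := by funext k; simp [gS]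
  have hgSins : ∀ (S : Finset (Fin r)) (m : Fin r), m ∉ S →
      gS (insert m S) = Function.update (gS S) m (YI m) := by
    intro S m hm
    funext k
    rcases eq_or_ne k m with rfl | hk
    · simp [gS, Function.update_self]
    · simp [gS, Function.update_of_ne hk, Finset.mem_insert, hk]
  let P : Finset (Fin r) → ℚ := fun S => ∏ k ∈ S, a k
  -- identity for tip-determinants
  have hI1 : ∀ (S : Finset (Fin r)) (i : Fin r), i ∉ S →
      (MQ (Function.update (gS S) i tI)).det = P S * T i := by
    intro S
    induction S using Finset.induction_on with
    | empty =>
      intro i _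
      rw [hgS0]
      simp [P, T]
    | insert _ _ hm =>
      rename_i m S ih
      intro i hi
      have him : i ≠ m := fun h => hi (h ▸ Finset.mem_insert_self m S)
      have hiS : i ∉ S := fun h => hi (Finset.mem_insert_of_mem h)
      rw [hgSins S m hm, Function.update_comm him.symm]
      rw [hexp]
      have hgm : Function.update (gS S) i tI m = XI m := by
        rw [Function.update_of_ne him.symm]
        simp [gS, hm]
      have e1 : Function.update (Function.update (gS S) i tI) m (XI m)
          = Function.update (gS S) i tI := by
        rw [← hgm, Function.update_eq_self]
      have e2 : (MQ (Function.update (Function.update (gS S) i tI) m tI)).det = 0 := by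
        apply hdup _ m i him.symm
        rw [Function.update_self, Function.update_of_ne him, Function.update_self]
      rw [e1, e2, ih i hiS, mul_zero, add_zero]
      have hPins : P (insert m S) = a m * P S := by
        simp only [P]
        rw [Finset.prod_insert hm]
      rw [hPins]
      ring
  -- the key expansion of mixed determinants
  obtain ⟨c, hc⟩ : ∃ c : Fin r → ℚ, ∀ k, c k = b k * T k / a k := ⟨_, fun _ => rfl⟩
  have hI2 : ∀ S : Finset (Fin r),
      (MQ (gS S)).det = P S * ((MQ XI).det + ∑ k ∈ S, c k) := by
    intro S
    induction S using Finset.induction_on with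
    | empty => simp [hgS0, P]
    | insert _ _ hm =>
      rename_i m S ih
      rw [hgSins S m hm, hexp]
      have e1 : Function.update (gS S) m (XI m) = gS S := by
        have : gS S m = XI m := by simp [gS, hm]
        rw [← this, Function.update_eq_self]
      rw [e1, ih, hI1 S m hm]
      have hPins : P (insert m S) = a m * P S := by
        simp only [P]
        rw [Finset.prod_insert hm]
      have hsum : ∑ k ∈ insert m S, c k = c m + ∑ k ∈ S, c k := Finset.sum_insert hm
      have hac : a m * c m = b m * T m := by
        rw [hc m, ← mul_div_assoc]
        exact mul_div_cancel_left₀ _ (ha m)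
      rw [hPins, hsum]
      linear_combination (-(P S)) * hac
  -- determinants giving b_k * T_i
  have hB : ∀ (i k : Fin r), i ≠ k →
      (MQ (Function.update XI i (YI k))).det = b k * T i := by
    intro i k hik
    rw [hexp XI i k]
    have e0 : Function.update XI i (XI k) i = Function.update XI i (XI k) k := by
      rw [Function.update_self, Function.update_of_ne (Ne.symm hik)]
    have hz : (MQ (Function.update XI i (XI k))).det = 0 := hdup _ i k hik e0
    rw [hz, mul_zero, zero_add]
  have hcne : ∀ k, c k ≠ 0 := by
    intro k
    rw [hc k]
    exact div_ne_zero (mul_ne_zero (hb k) (hT_ne k)) (ha k)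
  -- index with minimal |T|
  obtain ⟨k₀, -, hk₀⟩ := Finset.exists_min_image Finset.univ (fun i => |T i|)
    ⟨⟨0, hrpos⟩, Finset.mem_univ _⟩
  have hk₀' : ∀ k, |T k₀| ≤ |T k| := fun k => hk₀ k (Finset.mem_univ k)
  -- step lower bound for k ≠ k₀
  have hstep : ∀ k, k ≠ k₀ → |a k|⁻¹ ≤ |c k| := by
    intro k hk
    have hd : (MQ (Function.update XI k₀ (YI k))).det = b k * T k₀ := hB k₀ k (Ne.symm hk)
    have h1 : 1 ≤ |b k * T k₀| := by
      rw [← hd]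
      exact hone _ (by rw [hd]; exact mul_ne_zero (hb k) (hT_ne k₀))
    have h2 : 1 ≤ |b k * T k| := by
      have hmono : |b k * T k₀| ≤ |b k * T k| := by
        rw [abs_mul, abs_mul]
        exact mul_le_mul_of_nonneg_left (hk₀' k) (abs_nonneg _)
      linarith
    rw [hc k, abs_div, ← one_div]
    have hapos : 0 < |a k| := abs_pos.2 (ha k)
    rw [div_le_div_iff_of_pos_right hapos]
    exact h2
  -- products of |a|
  have hPabs : ∀ S : Finset (Fin r), |P S| = ∏ k ∈ S, |a k| := by
    intro S
    simp only [P]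
    rw [Finset.abs_prod]
  have hprodPos : ∀ S : Finset (Fin r), 0 < ∏ k ∈ S, |a k| := fun S =>
    Finset.prod_pos (fun k _ => abs_pos.2 (ha k))
  have hprodΔ : ∀ S : Finset (Fin r), S ≠ Finset.univ → ∏ k ∈ S, |a k| ≤ (Δ:ℚ) := by
    intro S hS
    obtain ⟨j, hj⟩ : ∃ j, j ∉ S := by
      by_contra h
      push_neg at h
      exact hS (Finset.eq_univ_iff_forall.2 h)
    have h1 : |P S| * |T j| ≤ (Δ:ℚ) := by
      rw [← abs_mul, ← hI1 S j hj]
      exact habs _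
    have h2 : |P S| ≤ |P S| * |T j| := by
      nth_rewrite 1 [← mul_one |P S|]
      exact mul_le_mul_of_nonneg_left (hT1 j) (abs_nonneg _)
    rw [← hPabs S]
    linarith
  have hsub : ∀ S : Finset (Fin r),
      ∑ k ∈ S, (1 - |a k|⁻¹) ≤ (Δ:ℚ) * (1 - (∏ k ∈ S, |a k|)⁻¹) :=
    sumOneSubInv (Δ:ℚ) (fun k => |a k|) ha1 hprodΔ
  -- sum of c over a subset, via the expansion identity
  have hsumc : ∀ S : Finset (Fin r), ∑ k ∈ S, c k = (MQ (gS S)).det / P S - (MQ XI).det := by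
    intro S
    have hPne : P S ≠ 0 := by
      have h0 := hprodPos S
      rw [← hPabs S] at h0
      exact abs_pos.1 h0
    rw [hI2 S]
    field_simp
    ring
  have hDdivbound : ∀ S : Finset (Fin r),
      |(MQ (gS S)).det / P S| ≤ (Δ:ℚ) * (∏ k ∈ S, |a k|)⁻¹ := by
    intro S
    rw [abs_div, hPabs S, div_eq_mul_inv]
    exact mul_le_mul_of_nonneg_right (habs _) (inv_nonneg.2 (hprodPos S).le)
  -- positive and negative parts
  set Sp := Finset.univ.filter (fun k : Fin r => 0 < c k) with hSp
  set Sm := Finset.univ.filter (fun k : Fin r => ¬ 0 < c k) with hSm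
  have habs_split : ∑ k, |c k| = (∑ k ∈ Sp, c k) + (∑ k ∈ Sm, (- c k)) := by
    rw [← Finset.sum_filter_add_sum_filter_not Finset.univ (fun k => 0 < c k) (fun k => |c k|)]
    congr 1
    · apply Finset.sum_congr rfl
      intro k hk
      exact abs_of_pos (Finset.mem_filter.1 hk).2
    · apply Finset.sum_congr rfl
      intro k hk
      have h1 : ¬ 0 < c k := (Finset.mem_filter.1 hk).2
      have h2 : c k < 0 := lt_of_le_of_ne (not_lt.1 h1) (hcne k)
      exact abs_of_neg h2
  have hW : ∑ k, |c k| ≤ (Δ:ℚ) * (∏ k ∈ Sp, |a k|)⁻¹ + (Δ:ℚ) * (∏ k ∈ Sm, |a k|)⁻¹ := by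
    rw [habs_split]
    have e : (∑ k ∈ Sp, c k) + (∑ k ∈ Sm, (- c k))
        = (MQ (gS Sp)).det / P Sp - (MQ (gS Sm)).det / P Sm := by
      have hneg : (∑ k ∈ Sm, (- c k)) = - ∑ k ∈ Sm, c k := by
        rw [Finset.sum_neg_distrib]
      rw [hneg, hsumc Sp, hsumc Sm]
      ring
    rw [e]
    have b1 := abs_le.1 (hDdivbound Sp)
    have b2 := abs_le.1 (hDdivbound Sm)
    linarith [b1.2, b2.1]
  -- middle sum is < 1
  have hmid : ∑ k, (|a k|⁻¹ - |c k|) < 1 := by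
    have hsplit : ∑ k, (|a k|⁻¹ - |c k|)
        = (|a k₀|⁻¹ - |c k₀|) + ∑ k ∈ Finset.univ.erase k₀, (|a k|⁻¹ - |c k|) :=
      (Finset.add_sum_erase _ _ (Finset.mem_univ k₀)).symm
    have hrest : ∑ k ∈ Finset.univ.erase k₀, (|a k|⁻¹ - |c k|) ≤ 0 := by
      apply Finset.sum_nonpos
      intro k hk
      have hkk : k ≠ k₀ := (Finset.mem_erase.1 hk).1
      linarith [hstep k hkk]
    have hc0 : 0 < |c k₀| := abs_pos.2 (hcne k₀)
    have hA0 : |a k₀|⁻¹ ≤ 1 := by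
      rw [inv_le_one_iff₀]
      right
      exact ha1 k₀
    rw [hsplit]
    linarith
  -- assemble everything
  have hS1 : ∑ k, (1 - |a k|⁻¹) = ∑ k ∈ Sp, (1 - |a k|⁻¹) + ∑ k ∈ Sm, (1 - |a k|⁻¹) :=
    (Finset.sum_filter_add_sum_filter_not _ _ _).symm
  have htotal : (r:ℚ) < 2*(Δ:ℚ) + 1 := by
    have e : (r:ℚ) = (∑ k, (1 - |a k|⁻¹)) + (∑ k, (|a k|⁻¹ - |c k|)) + ∑ k, |c k| := by
      rw [← Finset.sum_add_distrib, ← Finset.sum_add_distrib]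
      have : ∀ k : Fin r, 1 - |a k|⁻¹ + (|a k|⁻¹ - |c k|) + |c k| = 1 := by
        intro k; ring
      rw [Finset.sum_congr rfl (fun k _ => this k)]
      simp
    rw [e]
    have g1 := hsub Sp
    have g2 := hsub Sm
    rw [hS1]
    linarith [hW, hmid, g1, g2]
  have hfin : (r:ℤ) < 2*Δ + 1 := by exact_mod_cast htotal
  linarith
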